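/- arXiv:2208.00161 — 4 statements merged into one kernel-verified Lean document; each statement's English description precedes it below -/
import Mathlib

section
/- For the Ohmic relaxation function Φ(ω) = γ₀ / [(ω² − ω₀² − ω ω_c)² + (ω γ₀)²] with γ₀ > 0, ω₀ > 0, ω_c ∈ ℝ, the integral ∫_{-∞}^{∞} ω² Φ(ω) dω equals π. -/
open Real MeasureTheory

lemma cauchy_integrable' (γ c : ℝ) (hγ : 0 < γ) :
    Integrable (fun u : ℝ => γ / ((u - c) ^ 2 + γ ^ 2)) := by
  have h1 : Integrable (fun x : ℝ => (1 + x ^ 2)⁻¹) := integrable_inv_one_add_sq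
  have h2 := ((h1.comp_mul_right' (inv_ne_zero hγ.ne')).const_mul γ⁻¹).comp_sub_right c
  refine h2.congr (Filter.Eventually.of_forall fun u => ?_)
  field_simp
  ring

lemma cauchy_integral' (γ c : ℝ) (hγ : 0 < γ) :
    ∫ u : ℝ, γ / ((u - c) ^ 2 + γ ^ 2) = π := by
  have h0 : ∀ v : ℝ, γ / (v ^ 2 + γ ^ 2) = γ⁻¹ * (1 + (v * γ⁻¹) ^ 2)⁻¹ := by
    intro v; field_simp; ring
  calc ∫ u : ℝ, γ / ((u - c) ^ 2 + γ ^ 2)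
      = ∫ u : ℝ, γ / (u ^ 2 + γ ^ 2) :=
        integral_sub_right_eq_self (fun v => γ / (v ^ 2 + γ ^ 2)) c
    _ = γ⁻¹ * ∫ u : ℝ, (1 + (u * γ⁻¹) ^ 2)⁻¹ := by
        simp_rw [h0]; exact integral_const_mul _ _
    _ = π := by
        rw [MeasureTheory.Measure.integral_comp_mul_right (fun x : ℝ => (1 + x ^ 2)⁻¹) γ⁻¹,
          integral_univ_inv_one_add_sq, inv_inv, smul_eq_mul, abs_of_pos hγ]
        field_simp

/-- For the Ohmic relaxation function `Φ(ω) = γ₀ / ((ω² − ω₀² − ω ω_c)² + (ω γ₀)²)`,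
the integral of `ω² Φ(ω)` over the real line equals `π`. -/
theorem ohmic_relaxation_normalization
    (γ₀ ω₀ ω_c : ℝ) (hγ : 0 < γ₀) (hω₀ : 0 < ω₀) :
    ∫ ω : ℝ, ω ^ 2 * (γ₀ / ((ω ^ 2 - ω₀ ^ 2 - ω * ω_c) ^ 2 + (ω * γ₀) ^ 2)) = π := by
  set G : ℝ → ℝ := fun ω => ω ^ 2 * (γ₀ / ((ω ^ 2 - ω₀ ^ 2 - ω * ω_c) ^ 2 + (ω * γ₀) ^ 2))
    with hGdef
  set h : ℝ → ℝ := fun u => γ₀ / ((u - ω_c) ^ 2 + γ₀ ^ 2) with hhdef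
  set s : ℝ → ℝ := fun u => Real.sqrt (u ^ 2 + 4 * ω₀ ^ 2) with hsdef
  have hs4 : ∀ u : ℝ, 0 < u ^ 2 + 4 * ω₀ ^ 2 := fun u => by positivity
  have hs_sq : ∀ u, s u ^ 2 = u ^ 2 + 4 * ω₀ ^ 2 := fun u => Real.sq_sqrt (hs4 u).le
  have hs_gt : ∀ u : ℝ, |u| < s u := by
    intro u
    rw [hsdef, ← Real.sqrt_sq_eq_abs]
    exact Real.sqrt_lt_sqrt (sq_nonneg u) (by nlinarith)
  have hs_pos : ∀ u, 0 < s u := fun u => (abs_nonneg u).trans_lt (hs_gt u)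
  set φ₁ : ℝ → ℝ := fun u => (u + s u) / 2 with hφ₁def
  set φ₂ : ℝ → ℝ := fun u => (u - s u) / 2 with hφ₂def
  set d₁ : ℝ → ℝ := fun u => (1 + u / s u) / 2 with hd₁def
  set d₂ : ℝ → ℝ := fun u => (1 - u / s u) / 2 with hd₂def
  -- derivative of s
  have hds : ∀ u, HasDerivAt s (u / s u) u := by
    intro u
    have h1 : HasDerivAt (fun u : ℝ => u ^ 2 + 4 * ω₀ ^ 2) (2 * u) u := by
      simpa using ((hasDerivAt_pow 2 u).add_const (4 * ω₀ ^ 2))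
    have h2 := h1.sqrt (hs4 u).ne'
    convert h2 using 1
    rw [hsdef]
    field_simp
  have hdφ₁ : ∀ u, HasDerivAt φ₁ (d₁ u) u := by
    intro u
    have := ((hasDerivAt_id u).add (hds u)).div_const 2
    simpa [hφ₁def, hd₁def] using this
  have hdφ₂ : ∀ u, HasDerivAt φ₂ (d₂ u) u := by
    intro u
    have := ((hasDerivAt_id u).sub (hds u)).div_const 2
    simpa [hφ₂def, hd₂def] using this
  -- bounds on d
  have hratio : ∀ u : ℝ, |u| / s u < 1 := fun u => (div_lt_one (hs_pos u)).2 (hs_gt u)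
  -- bounds on d
  have habs : ∀ u : ℝ, -s u < u ∧ u < s u := fun u => abs_lt.1 (hs_gt u)
  have hd₁pos : ∀ u, 0 < d₁ u := by
    intro u
    have h1 : -1 < u / s u := by
      rw [lt_div_iff₀ (hs_pos u)]; linarith [(habs u).1]
    rw [hd₁def]; dsimp only; linarith
  have hd₂pos : ∀ u, 0 < d₂ u := by
    intro u
    have h1 : u / s u < 1 := by
      rw [div_lt_one (hs_pos u)]; exact (habs u).2
    rw [hd₂def]; dsimp only; linarith
  have hd₁le : ∀ u, d₁ u ≤ 1 := by
    intro u
    have h1 : u / s u < 1 := by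
      rw [div_lt_one (hs_pos u)]; exact (habs u).2
    rw [hd₁def]; dsimp only; linarith
  have hd₂le : ∀ u, d₂ u ≤ 1 := by
    intro u
    have h1 : -1 < u / s u := by
      rw [lt_div_iff₀ (hs_pos u)]; linarith [(habs u).1]
    rw [hd₂def]; dsimp only; linarith
  have hdsum : ∀ u, d₁ u + d₂ u = 1 := by
    intro u; rw [hd₁def, hd₂def]; dsimp only; ring
  -- sign of φ
  have hφ₁pos : ∀ u, 0 < φ₁ u := by
    intro u; rw [hφ₁def]; dsimp only; linarith [(habs u).1]
  have hφ₂neg : ∀ u, φ₂ u < 0 := by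
    intro u; rw [hφ₂def]; dsimp only; linarith [(habs u).2]
  -- quadratic identities
  have key₁ : ∀ u, φ₁ u ^ 2 = u * φ₁ u + ω₀ ^ 2 := by
    intro u
    have hq := hs_sq u
    rw [hφ₁def]; dsimp only; linear_combination hq / 4
  have key₂ : ∀ u, φ₂ u ^ 2 = u * φ₂ u + ω₀ ^ 2 := by
    intro u
    have hq := hs_sq u
    rw [hφ₂def]; dsimp only; linear_combination hq / 4
  -- evaluation of G along the substitution
  have hGφ : ∀ (ω u : ℝ), ω ≠ 0 → ω ^ 2 = u * ω + ω₀ ^ 2 → G ω = h u := by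
    intro ω u hω hq
    have hden : (ω ^ 2 - ω₀ ^ 2 - ω * ω_c) ^ 2 + (ω * γ₀) ^ 2
        = ω ^ 2 * ((u - ω_c) ^ 2 + γ₀ ^ 2) := by
      have h1 : ω ^ 2 - ω₀ ^ 2 - ω * ω_c = ω * (u - ω_c) := by linear_combination hq
      rw [h1]; ring
    have hpos : (0:ℝ) < (u - ω_c) ^ 2 + γ₀ ^ 2 := by positivity
    rw [hGdef, hhdef]; dsimp only
    rw [hden]
    field_simp
  -- injectivity
  have hleft₁ : ∀ u, (φ₁ u ^ 2 - ω₀ ^ 2) / φ₁ u = u := by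
    intro u
    rw [key₁ u, add_sub_cancel_right, mul_div_assoc, div_self (hφ₁pos u).ne', mul_one]
  have hleft₂ : ∀ u, (φ₂ u ^ 2 - ω₀ ^ 2) / φ₂ u = u := by
    intro u
    rw [key₂ u, add_sub_cancel_right, mul_div_assoc, div_self (hφ₂neg u).ne, mul_one]
  have hinj₁ : Set.InjOn φ₁ Set.univ := by
    intro u _ v _ huv
    rw [← hleft₁ u, ← hleft₁ v, huv]
  have hinj₂ : Set.InjOn φ₂ Set.univ := by
    intro u _ v _ huv
    rw [← hleft₂ u, ← hleft₂ v, huv]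
  -- images
  have himg₁ : φ₁ '' Set.univ = Set.Ioi 0 := by
    apply subset_antisymm
    · rintro _ ⟨u, -, rfl⟩; exact hφ₁pos u
    · intro ω hω
      replace hω : (0:ℝ) < ω := hω
      refine ⟨ω - ω₀ ^ 2 / ω, Set.mem_univ _, ?_⟩
      have hsv : s (ω - ω₀ ^ 2 / ω) = ω + ω₀ ^ 2 / ω := by
        rw [hsdef]; dsimp only
        rw [show (ω - ω₀ ^ 2 / ω) ^ 2 + 4 * ω₀ ^ 2 = (ω + ω₀ ^ 2 / ω) ^ 2 by
          field_simp; ring]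
        exact Real.sqrt_sq (by positivity)
      rw [hφ₁def]; dsimp only
      rw [hsv]; ring
  have himg₂ : φ₂ '' Set.univ = Set.Iio 0 := by
    apply subset_antisymm
    · rintro _ ⟨u, -, rfl⟩; exact hφ₂neg u
    · intro ω hω
      replace hω : ω < 0 := hω
      refine ⟨ω - ω₀ ^ 2 / ω, Set.mem_univ _, ?_⟩
      have hsv : s (ω - ω₀ ^ 2 / ω) = -(ω + ω₀ ^ 2 / ω) := by
        rw [hsdef]; dsimp only
        rw [show (ω - ω₀ ^ 2 / ω) ^ 2 + 4 * ω₀ ^ 2 = (-(ω + ω₀ ^ 2 / ω)) ^ 2 by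
          field_simp [hω.ne]; ring]
        refine Real.sqrt_sq ?_
        have h1 : ω₀ ^ 2 / ω < 0 := div_neg_of_pos_of_neg (by positivity) hω
        linarith
      rw [hφ₂def]; dsimp only
      rw [hsv]; ring
  -- change of variables
  have cov₁ : ∫ ω in Set.Ioi (0:ℝ), G ω = ∫ u : ℝ, d₁ u * h u := by
    rw [← himg₁, integral_image_eq_integral_abs_deriv_smul MeasurableSet.univ
        (fun u _ => (hdφ₁ u).hasDerivWithinAt) hinj₁ G, Measure.restrict_univ]
    congr 1
    funext u
    rw [abs_of_pos (hd₁pos u), smul_eq_mul, hGφ (φ₁ u) u (hφ₁pos u).ne' (key₁ u)]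
  have cov₂ : ∫ ω in Set.Iio (0:ℝ), G ω = ∫ u : ℝ, d₂ u * h u := by
    rw [← himg₂, integral_image_eq_integral_abs_deriv_smul MeasurableSet.univ
        (fun u _ => (hdφ₂ u).hasDerivWithinAt) hinj₂ G, Measure.restrict_univ]
    congr 1
    funext u
    rw [abs_of_pos (hd₂pos u), smul_eq_mul, hGφ (φ₂ u) u (hφ₂neg u).ne (key₂ u)]
  -- integrability
  have hint : Integrable h := cauchy_integrable' γ₀ ω_c hγ
  have hcont_s : Continuous s := by
    rw [hsdef]
    exact Real.continuous_sqrt.comp ((continuous_pow 2).add continuous_const)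
  have hs_ne : ∀ u, s u ≠ 0 := fun u => (hs_pos u).ne'
  have hcont_d₁ : Continuous d₁ := by
    rw [hd₁def]
    exact (continuous_const.add (continuous_id.div hcont_s hs_ne)).div_const 2
  have hcont_d₂ : Continuous d₂ := by
    rw [hd₂def]
    exact (continuous_const.sub (continuous_id.div hcont_s hs_ne)).div_const 2
  have hcont_h : Continuous h := by
    rw [hhdef]
    refine continuous_const.div
      (((continuous_id.sub continuous_const).pow 2).add continuous_const)
      fun u => (by positivity : (0:ℝ) < (u - ω_c) ^ 2 + γ₀ ^ 2).ne'
  have hh_nonneg : ∀ u, 0 ≤ h u := by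
    intro u
    rw [hhdef]; dsimp only
    positivity
  have hint₁ : Integrable (fun u => d₁ u * h u) := by
    refine hint.mono ((hcont_d₁.mul hcont_h).aestronglyMeasurable)
      (Filter.Eventually.of_forall fun u => ?_)
    rw [Real.norm_eq_abs, Real.norm_eq_abs, abs_mul, abs_of_pos (hd₁pos u),
      abs_of_nonneg (hh_nonneg u)]
    exact mul_le_of_le_one_left (hh_nonneg u) (hd₁le u)
  have hint₂ : Integrable (fun u => d₂ u * h u) := by
    refine hint.mono ((hcont_d₂.mul hcont_h).aestronglyMeasurable)
      (Filter.Eventually.of_forall fun u => ?_)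
    rw [Real.norm_eq_abs, Real.norm_eq_abs, abs_mul, abs_of_pos (hd₂pos u),
      abs_of_nonneg (hh_nonneg u)]
    exact mul_le_of_le_one_left (hh_nonneg u) (hd₂le u)
  have hGint₁ : IntegrableOn G (Set.Ioi 0) := by
    rw [← himg₁, integrableOn_image_iff_integrableOn_abs_deriv_smul MeasurableSet.univ
      (fun u _ => (hdφ₁ u).hasDerivWithinAt) hinj₁ G]
    rw [IntegrableOn, Measure.restrict_univ]
    refine hint₁.congr (Filter.Eventually.of_forall fun u => ?_)
    show d₁ u * h u = |d₁ u| • G (φ₁ u)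
    rw [abs_of_pos (hd₁pos u), smul_eq_mul, hGφ (φ₁ u) u (hφ₁pos u).ne' (key₁ u)]
  have hGint₂ : IntegrableOn G (Set.Iio 0) := by
    rw [← himg₂, integrableOn_image_iff_integrableOn_abs_deriv_smul MeasurableSet.univ
      (fun u _ => (hdφ₂ u).hasDerivWithinAt) hinj₂ G]
    rw [IntegrableOn, Measure.restrict_univ]
    refine hint₂.congr (Filter.Eventually.of_forall fun u => ?_)
    show d₂ u * h u = |d₂ u| • G (φ₂ u)
    rw [abs_of_pos (hd₂pos u), smul_eq_mul, hGφ (φ₂ u) u (hφ₂neg u).ne (key₂ u)]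
  -- split the integral
  have hae : (Set.Iio (0:ℝ) ∪ Set.Ioi 0 : Set ℝ) =ᵐ[volume] (Set.univ : Set ℝ) := by
    rw [MeasureTheory.ae_eq_univ, Set.Iio_union_Ioi, compl_compl]
    exact measure_singleton 0
  have hsplit : ∫ ω, G ω = (∫ ω in Set.Iio (0:ℝ), G ω) + ∫ ω in Set.Ioi (0:ℝ), G ω := by
    rw [← setIntegral_univ, ← setIntegral_congr_set hae,
      setIntegral_union ((Set.Iio_disjoint_Ici le_rfl).mono_right Set.Ioi_subset_Ici_self) measurableSet_Ioi hGint₂ hGint₁]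
  rw [hsplit, cov₁, cov₂, ← integral_add hint₂ hint₁]
  rw [show (fun u => d₂ u * h u + d₁ u * h u) = h by
    funext u
    linear_combination h u * hdsum u]
  exact cauchy_integral' γ₀ ω_c hγ
end

section
/- The function P_k(ω) = (1/π) ω² [Φ(ω) + Φ(−ω)], with Φ the Ohmic relaxation function Φ(ω) = γ₀ / [(ω² − ω₀² − ω ω_c)² + (ω γ₀)²] and γ₀ > 0, is a probability density on [0, ∞): it is nonnegative for all ω ≥ 0 and ∫₀^∞ P_k(ω) dω = 1. -/
open Real MeasureTheory Filter Topology

lemma hdim {f : ℝ → ℂ} {f' : ℂ} {x : ℝ} (h : HasDerivAt f f' x) :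
    HasDerivAt (fun x => (f x).im) f'.im x := by
  simpa [Function.comp_def] using (Complex.imCLM.hasFDerivAt.comp x h.hasFDerivAt).hasDerivAt

lemma abs_tendsto_top (c : ℂ) : Tendsto (fun ω : ℝ => ‖(↑ω : ℂ) - c‖) atTop atTop := by
  apply tendsto_atTop_mono (fun ω => by
    simpa using Complex.abs_re_le_norm ((ω : ℂ) - c))
  exact tendsto_abs_atTop_atTop.comp (tendsto_atTop_add_const_right _ (-c.re) tendsto_id)

lemma abs_tendsto_bot (c : ℂ) : Tendsto (fun ω : ℝ => ‖(↑ω : ℂ) - c‖) atBot atTop := by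
  apply tendsto_atTop_mono (fun ω => by
    simpa using Complex.abs_re_le_norm ((ω : ℂ) - c))
  exact tendsto_abs_atBot_atTop.comp (tendsto_atBot_add_const_right _ (-c.re) tendsto_id)

lemma arg_lim_top (c : ℂ) : Tendsto (fun ω : ℝ => Complex.arg (↑ω - c)) atTop (𝓝 0) := by
  have hq : Tendsto (fun ω : ℝ => ((ω : ℂ) - c).im / ‖(ω : ℂ) - c‖) atTop (𝓝 0) := by
    simp only [Complex.sub_im, Complex.ofReal_im, zero_sub]
    simpa [neg_div, div_eq_mul_inv] using (((abs_tendsto_top c).inv_tendsto_atTop).const_mul c.im).neg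
  have heq : ∀ᶠ ω : ℝ in atTop, Real.arcsin (((ω : ℂ) - c).im / ‖(ω : ℂ) - c‖)
      = Complex.arg ((ω : ℂ) - c) := by
    filter_upwards [eventually_ge_atTop c.re] with ω hω
    rw [Complex.arg_of_re_nonneg (by simpa using sub_nonneg.mpr hω)]
  have := (Real.continuous_arcsin.tendsto 0).comp hq
  rw [Real.arcsin_zero] at this
  exact Tendsto.congr' heq this

lemma arg_lim_bot (c : ℂ) (hc : 0 < c.im) :
    Tendsto (fun ω : ℝ => Complex.arg (↑ω - c)) atBot (𝓝 (-π)) := by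
  have hq : Tendsto (fun ω : ℝ => (-(((ω : ℂ) - c))).im / ‖(ω : ℂ) - c‖) atBot (𝓝 0) := by
    simp only [Complex.neg_im, Complex.sub_im, Complex.ofReal_im, zero_sub, neg_neg]
    simpa [div_eq_mul_inv] using ((abs_tendsto_bot c).inv_tendsto_atTop).const_mul c.im
  have heq : ∀ᶠ ω : ℝ in atBot, Real.arcsin ((-(((ω : ℂ) - c))).im / ‖(ω : ℂ) - c‖) - π
      = Complex.arg ((ω : ℂ) - c) := by
    filter_upwards [eventually_lt_atBot c.re] with ω hω
    rw [Complex.arg_of_re_neg_of_im_neg (by simpa using sub_neg.mpr hω) (by simpa using hc)]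
  have : Tendsto (fun ω : ℝ => Real.arcsin ((-(((ω : ℂ) - c))).im / ‖(ω : ℂ) - c‖) - π)
      atBot (𝓝 (Real.arcsin 0 - π)) :=
    (((Real.continuous_arcsin.tendsto 0).comp hq).sub_const π)
  rw [Real.arcsin_zero, zero_sub] at this
  exact Tendsto.congr' heq this

lemma inv_lim (c : ℂ) (l : Filter ℝ) (h : Tendsto (fun ω : ℝ => ‖(↑ω : ℂ) - c‖) l atTop) :
    Tendsto (fun ω : ℝ => ((ω : ℂ) - c)⁻¹) l (𝓝 0) := by
  rw [tendsto_zero_iff_norm_tendsto_zero]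
  simpa [Pi.inv_def] using h.inv_tendsto_atTop

lemma log_deriv (c : ℂ) (hc : 0 < c.im) (ω : ℝ) :
    HasDerivAt (fun ω : ℝ => Complex.log (↑ω - c)) ((↑ω - c)⁻¹) ω := by
  have hmem : ((ω : ℂ) - c) ∈ Complex.slitPlane := by
    rw [Complex.mem_slitPlane_iff]
    right
    simpa using hc.ne'
  have h1 : HasDerivAt (fun z : ℂ => Complex.log (z - c)) ((↑ω - c)⁻¹) ↑ω := by
    simpa [Function.comp_def] using (Complex.hasDerivAt_log hmem).comp (ω : ℂ) ((hasDerivAt_id _).sub_const c)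
  exact h1.comp_ofReal

lemma sub_ne (c : ℂ) (hc : 0 < c.im) (ω : ℝ) : ((ω : ℂ) - c) ≠ 0 := by
  intro h
  have := congrArg Complex.im h
  simp at this
  exact hc.ne' this


lemma tendsto_complex_of_re_im {α : Type*} {f : α → ℂ} {l : Filter α} {x : ℂ}
    (hre : Tendsto (fun t => (f t).re) l (𝓝 x.re))
    (him : Tendsto (fun t => (f t).im) l (𝓝 x.im)) : Tendsto f l (𝓝 x) := by
  have := ((Complex.continuous_ofReal.tendsto _).comp hre).add
    (((Complex.continuous_ofReal.tendsto _).comp him).mul_const Complex.I)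
  simpa [Function.comp_def, Complex.re_add_im] using this

lemma log_diff_lim (a b : ℂ) (ha : 0 < a.im) (hb : 0 < b.im) :
    Tendsto (fun ω : ℝ => Complex.log (↑ω - a) - Complex.log (↑ω - b)) atTop (𝓝 0) ∧
    Tendsto (fun ω : ℝ => Complex.log (↑ω - a) - Complex.log (↑ω - b)) atBot (𝓝 0) := by
  have habs : ∀ l : Filter ℝ, Tendsto (fun ω : ℝ => ‖(↑ω : ℂ) - a‖) l atTop →
      Tendsto (fun ω : ℝ => ‖(↑ω : ℂ) - b‖) l atTop →
      Tendsto (fun ω : ℝ => Real.log (‖(↑ω : ℂ) - a‖) - Real.log (‖(↑ω : ℂ) - b‖))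
        l (𝓝 0) := by
    intro l hA hB
    have hrat : Tendsto (fun ω : ℝ => ((ω : ℂ) - a) / ((ω : ℂ) - b)) l (𝓝 1) := by
      have h1 : Tendsto (fun ω : ℝ => 1 + (b - a) * ((ω : ℂ) - b)⁻¹) l (𝓝 (1 + (b - a) * 0)) :=
        tendsto_const_nhds.add (tendsto_const_nhds.mul (inv_lim b l hB))
      rw [mul_zero, add_zero] at h1
      apply h1.congr'
      filter_upwards [hB.eventually_gt_atTop 0] with ω hω
      have hne : ((ω : ℂ) - b) ≠ 0 := by
        intro h; rw [h] at hω; simp at hω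
      field_simp
      ring
    have hcont : Tendsto (fun ω : ℝ => Real.log (‖(ω : ℂ) - a‖ / ‖(ω : ℂ) - b‖)) l (𝓝 0) := by
      have : ContinuousAt (fun z : ℂ => Real.log ‖z‖) 1 := by
        apply (Real.continuousAt_log (by simp)).comp
        exact continuous_norm.continuousAt
      simpa [Function.comp_def, map_div₀] using this.tendsto.comp hrat
    apply hcont.congr'
    filter_upwards [hA.eventually_gt_atTop 0, hB.eventually_gt_atTop 0] with ω h1 h2
    rw [Real.log_div h1.ne' h2.ne']

  constructor
  · apply tendsto_complex_of_re_im (x := 0)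
    · simp only [Complex.sub_re, Complex.log_re, Complex.zero_re]
      exact habs atTop (abs_tendsto_top a) (abs_tendsto_top b)
    · simp only [Complex.sub_im, Complex.log_im, Complex.zero_im]
      simpa using (arg_lim_top a).sub (arg_lim_top b)
  · apply tendsto_complex_of_re_im (x := 0)
    · simp only [Complex.sub_re, Complex.log_re, Complex.zero_re]
      exact habs atBot (abs_tendsto_bot a) (abs_tendsto_bot b)
    · simp only [Complex.sub_im, Complex.log_im, Complex.zero_im]
      simpa using (arg_lim_bot a ha).sub (arg_lim_bot b hb)

lemma im_mul_lim (k : ℂ) {f : ℝ → ℂ} {l : Filter ℝ} (h : Tendsto f l (𝓝 0)) :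
    Tendsto (fun ω => (k * f ω).im) l (𝓝 0) := by
  have := (Complex.continuous_im.tendsto (k * 0)).comp (tendsto_const_nhds.mul h)
  simpa [Function.comp_def] using this

lemma exists_antideriv (a b : ℂ) (ha : 0 < a.im) (hb : 0 < b.im) :
    ∃ g : ℝ → ℝ, (∀ ω : ℝ, HasDerivAt g (((ω : ℂ) / ((↑ω - a) * (↑ω - b))).im) ω) ∧
      Tendsto g atTop (𝓝 0) ∧ Tendsto g atBot (𝓝 (-π)) := by
  rcases eq_or_ne a b with rfl | hne
  · refine ⟨fun ω => (Complex.log (↑ω - a) - a * ((ω : ℂ) - a)⁻¹).im, fun ω => ?_, ?_, ?_⟩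
    · have h2 : HasDerivAt (fun ω : ℝ => a * ((ω : ℂ) - a)⁻¹)
          (a * (-1 / ((↑ω - a) ^ 2))) ω := by
        have hbase : HasDerivAt (fun z : ℂ => (z - a)⁻¹) (-1 / ((↑ω - a) ^ 2)) (ω : ℂ) := by
          simpa using ((hasDerivAt_id ((ω : ℂ))).sub_const a).fun_inv (sub_ne a ha ω)
        exact (hbase.comp_ofReal).const_mul a
      have h3 := hdim ((log_deriv a ha ω).sub h2)
      convert h3 using 1
      congr 1
      have hz := sub_ne a ha ω
      field_simp
      ring
    · have hinv : Tendsto (fun ω : ℝ => a * ((ω : ℂ) - a)⁻¹) atTop (𝓝 0) := by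
        simpa using tendsto_const_nhds.mul (inv_lim a atTop (abs_tendsto_top a))
      have := (arg_lim_top a).sub ((Complex.continuous_im.tendsto 0).comp hinv)
      simpa [Function.comp_def, Complex.sub_im, Complex.log_im] using this
    · have hinv : Tendsto (fun ω : ℝ => a * ((ω : ℂ) - a)⁻¹) atBot (𝓝 0) := by
        simpa using tendsto_const_nhds.mul (inv_lim a atBot (abs_tendsto_bot a))
      have := (arg_lim_bot a ha).sub ((Complex.continuous_im.tendsto 0).comp hinv)
      simpa [Function.comp_def, Complex.sub_im, Complex.log_im] using this
  · have hab : a - b ≠ 0 := sub_ne_zero.mpr hne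
    refine ⟨fun ω => ((a * Complex.log (↑ω - a) - b * Complex.log (↑ω - b)) / (a - b)).im,
      fun ω => ?_, ?_, ?_⟩
    · have hC := (((log_deriv a ha ω).const_mul a).sub
        ((log_deriv b hb ω).const_mul b)).div_const (a - b)
      have h3 := hdim hC
      refine h3.congr_deriv ?_
      congr 1
      have hza := sub_ne a ha ω
      have hzb := sub_ne b hb ω
      field_simp
      ring
    all_goals {
      have hfun : ∀ ω : ℝ,
          ((a * Complex.log (↑ω - a) - b * Complex.log (↑ω - b)) / (a - b)).im
          = (Complex.log (↑ω - b)).im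
            + ((a / (a - b)) * (Complex.log (↑ω - a) - Complex.log (↑ω - b))).im := by
        intro ω
        rw [← Complex.add_im]
        congr 1
        field_simp
        ring
      simp only [hfun, Complex.log_im]
      first
      | · have := (arg_lim_top b).add
            (im_mul_lim (a / (a - b)) (log_diff_lim a b ha hb).1)
          simpa using this
      | · have := (arg_lim_bot b hb).add
            (im_mul_lim (a / (a - b)) (log_diff_lim a b ha hb).2)
          simpa using this
    }

lemma im_pos_aux (γ₀ ω₀ : ℝ) (hγ : 0 < γ₀) (hω₀ : 0 < ω₀) (a b : ℂ)
    (hsum : (a + b).im = γ₀) (hab : a * b = -(ω₀ : ℂ) ^ 2) : 0 < a.im := by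
  have ha0 : a ≠ 0 := by
    intro h
    rw [h, zero_mul] at hab
    have h1 : (ω₀ : ℂ) ^ 2 = 0 := by linear_combination hab
    have h2 : ω₀ = 0 := by simpa using h1
    exact hω₀.ne' h2
  have hbeq : b = -(ω₀ : ℂ) ^ 2 / a := by
    rw [eq_div_iff ha0, ← hab]; ring
  have hcast : -(ω₀ : ℂ) ^ 2 = ((-(ω₀ ^ 2) : ℝ) : ℂ) := by push_cast; ring
  have hbim : b.im = ω₀ ^ 2 * a.im / Complex.normSq a := by
    rw [hbeq, hcast, Complex.div_im]
    simp only [Complex.ofReal_im, Complex.ofReal_re, Complex.ofReal_neg, Complex.neg_im,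
      Complex.neg_re, Complex.ofReal_pow]
    simp [pow_two, Complex.mul_im, Complex.mul_re]
    ring
  have hnsq : 0 < Complex.normSq a := Complex.normSq_pos.mpr ha0
  rw [Complex.add_im, hbim] at hsum
  have hs2 : a.im * (Complex.normSq a + ω₀ ^ 2) = γ₀ * Complex.normSq a := by
    field_simp at hsum
    nlinarith [hsum]
  nlinarith [mul_pos hγ hnsq, hnsq, sq_nonneg ω₀]

lemma exists_roots (γ₀ ω₀ ω_c : ℝ) (hγ : 0 < γ₀) (hω₀ : 0 < ω₀) :
    ∃ a b : ℂ, a + b = (ω_c : ℂ) + γ₀ * Complex.I ∧ a * b = -(ω₀ : ℂ) ^ 2 ∧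
      0 < a.im ∧ 0 < b.im := by
  set s : ℂ := (ω_c : ℂ) + γ₀ * Complex.I with hs
  obtain ⟨r, hr⟩ : ∃ r : ℂ, r ^ 2 = s ^ 2 + 4 * (ω₀ : ℂ) ^ 2 := by
    rcases eq_or_ne (s ^ 2 + 4 * (ω₀ : ℂ) ^ 2) 0 with h | h
    · exact ⟨0, by rw [h]; ring⟩
    · refine ⟨Complex.exp (Complex.log (s ^ 2 + 4 * (ω₀ : ℂ) ^ 2) / 2), ?_⟩
      rw [← Complex.exp_nat_mul]
      have h2 : ((2 : ℕ) : ℂ) * (Complex.log (s ^ 2 + 4 * (ω₀ : ℂ) ^ 2) / 2)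
          = Complex.log (s ^ 2 + 4 * (ω₀ : ℂ) ^ 2) := by push_cast; ring
      rw [h2, Complex.exp_log h]
  refine ⟨(s + r) / 2, (s - r) / 2, by ring, ?_, ?_, ?_⟩
  · linear_combination (-(1 : ℂ) / 4) * hr
  · apply im_pos_aux γ₀ ω₀ hγ hω₀ _ ((s - r) / 2)
    · have : (s + r) / 2 + (s - r) / 2 = s := by ring
      rw [this, hs]; simp
    · linear_combination (-(1 : ℂ) / 4) * hr
  · apply im_pos_aux γ₀ ω₀ hγ hω₀ _ ((s + r) / 2)
    · have : (s - r) / 2 + (s + r) / 2 = s := by ring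
      rw [this, hs]; simp
    · linear_combination (-(1 : ℂ) / 4) * hr

lemma rep (γ₀ ω₀ ω_c : ℝ) (a b : ℂ) (hsum : a + b = (ω_c : ℂ) + γ₀ * Complex.I)
    (hab : a * b = -(ω₀ : ℂ) ^ 2) (ω : ℝ) :
    ((ω : ℂ) / ((↑ω - a) * (↑ω - b))).im
      = γ₀ * ω ^ 2 / ((ω ^ 2 - ω₀ ^ 2 - ω * ω_c) ^ 2 + (ω * γ₀) ^ 2) := by
  have hden : ((ω : ℂ) - a) * ((ω : ℂ) - b)
      = ((ω ^ 2 - ω₀ ^ 2 - ω * ω_c : ℝ) : ℂ) + ((-(ω * γ₀) : ℝ) : ℂ) * Complex.I := by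
    have h1 : ((ω : ℂ) - a) * ((ω : ℂ) - b) = (ω : ℂ) ^ 2 - (a + b) * ω + a * b := by ring
    rw [h1, hsum, hab]; push_cast; ring
  rw [hden]
  set x : ℝ := ω ^ 2 - ω₀ ^ 2 - ω * ω_c with hx
  set y : ℝ := -(ω * γ₀) with hy
  rw [Complex.div_im, Complex.normSq_apply]
  simp only [Complex.add_re, Complex.add_im, Complex.mul_re, Complex.mul_im,
    Complex.ofReal_re, Complex.ofReal_im, Complex.I_re, Complex.I_im]
  rw [hx, hy]
  ring

/-- `P_k(ω) = (1/π) ω² (Φ(ω) + Φ(−ω))` with the Ohmic relaxation function `Φ` is a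
probability density on `[0,∞)`: it is nonnegative there and integrates to `1`. -/
theorem Pk_probability_density
    (γ₀ ω₀ ω_c : ℝ) (hγ : 0 < γ₀) (hω₀ : 0 < ω₀)
    (Φ : ℝ → ℝ)
    (hΦ : ∀ ω, Φ ω = γ₀ / ((ω ^ 2 - ω₀ ^ 2 - ω * ω_c) ^ 2 + (ω * γ₀) ^ 2))
    (P_k : ℝ → ℝ)
    (hP : ∀ ω, P_k ω = (1 / π) * ω ^ 2 * (Φ ω + Φ (-ω))) :
    (∀ ω : ℝ, 0 ≤ ω → 0 ≤ P_k ω) ∧ (∫ ω in Set.Ioi (0 : ℝ), P_k ω = 1) := by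
  have hπ := Real.pi_pos
  constructor
  · intro ω _
    rw [hP, hΦ ω, hΦ (-ω)]
    positivity
  · obtain ⟨a, b, hsum, hab, ha, hb⟩ := exists_roots γ₀ ω₀ ω_c hγ hω₀
    obtain ⟨g, hg, htop, hbot⟩ := exists_antideriv a b ha hb
    set F : ℝ → ℝ := fun ω =>
      γ₀ * ω ^ 2 / ((ω ^ 2 - ω₀ ^ 2 - ω * ω_c) ^ 2 + (ω * γ₀) ^ 2)
      + γ₀ * (-ω) ^ 2 / (((-ω) ^ 2 - ω₀ ^ 2 - (-ω) * ω_c) ^ 2 + ((-ω) * γ₀) ^ 2) with hF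
    have hFint : ∫ ω in Set.Ioi (0 : ℝ), F ω = π := by
      have hH : ∀ ω : ℝ, HasDerivAt (fun ω => g ω - g (-ω)) (F ω) ω := by
        intro ω
        have h2 : HasDerivAt (fun ω : ℝ => g (-ω))
            (-((((-ω : ℝ) : ℂ) / ((↑(-ω : ℝ) - a) * (↑(-ω : ℝ) - b))).im)) ω := by
          simpa [Function.comp_def] using (hg (-ω)).comp ω (hasDerivAt_neg ω)
        have h3 := (hg ω).fun_sub h2
        refine h3.congr_deriv ?_
        rw [hF]
        simp only []
        rw [rep γ₀ ω₀ ω_c a b hsum hab ω, rep γ₀ ω₀ ω_c a b hsum hab (-ω)]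
        ring
      have hnonneg : ∀ ω ∈ Set.Ioi (0 : ℝ), 0 ≤ F ω := by
        intro ω _
        rw [hF]
        positivity
      have hTop : Tendsto (fun ω => g ω - g (-ω)) atTop (𝓝 (0 - (-π))) :=
        htop.sub (hbot.comp tendsto_neg_atTop_atBot)
      have hres := integral_Ioi_of_hasDerivAt_of_nonneg' (fun x _ => hH x) hnonneg hTop
      simpa using hres
    have hpt : ∀ ω : ℝ, P_k ω = (1 / π) * F ω := by
      intro ω
      rw [hP, hΦ ω, hΦ (-ω), hF]
      ring
    calc ∫ ω in Set.Ioi (0 : ℝ), P_k ω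
        = ∫ ω in Set.Ioi (0 : ℝ), (1 / π) * F ω := by simp only [hpt]
      _ = (1 / π) * ∫ ω in Set.Ioi (0 : ℝ), F ω := integral_const_mul _ _
      _ = 1 := by rw [hFint]; field_simp
end

section
/- For all real x ≠ 0, x coth x = 1 + 2 Σ_{n=1}^∞ x²/(x² + n²π²), with the series converging absolutely. -/
/-- Hyperbolic cotangent. -/
noncomputable def coth (x : ℝ) : ℝ := Real.cosh x / Real.sinh x

open Real

namespace CothMittagLeffler

open Complex MeasureTheory intervalIntegral Set

lemma sub_ne' (X : ℝ) (hX : X ≠ 0) (n : ℤ) : (X : ℂ) - 2*π*Complex.I*n ≠ 0 := by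
  intro h
  have := congrArg Complex.re h
  simp [Complex.ext_iff] at this
  exact hX this

lemma add_ne' (X : ℝ) (hX : X ≠ 0) (n : ℤ) : (X : ℂ) + 2*π*Complex.I*n ≠ 0 := by
  intro h
  have := congrArg Complex.re h
  simp [Complex.ext_iff] at this
  exact hX this

lemma neg_sub_ne' (X : ℝ) (hX : X ≠ 0) (n : ℤ) : -(X : ℂ) - 2*π*Complex.I*n ≠ 0 := by
  have := sub_ne' (-X) (neg_ne_zero.mpr hX) n
  simpa using this

lemma exp_fac (s : ℂ) (n : ℤ) : cexp (s - 2*π*Complex.I*n) = cexp s := by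
  rw [sub_eq_add_neg, Complex.exp_add]
  have : cexp (-(2*π*Complex.I*n)) = 1 := by
    have := Complex.exp_int_mul_two_pi_mul_I (-n)
    rw [← this]
    congr 1
    push_cast
    ring
  rw [this, mul_one]

lemma coeff_eq (X : ℝ) (hX : X ≠ 0) (n : ℤ) :
    fourierCoeff (AddCircle.liftIco 1 0 (fun t => ((Real.cosh (X*t - X/2) : ℝ) : ℂ))) n
      = ((Real.sinh (X/2) * (2*X) / (X^2 + 4*π^2*(n:ℝ)^2) : ℝ) : ℂ) := by
  haveI : Fact ((0:ℝ) < 1) := ⟨one_pos⟩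
  rw [fourierCoeff_liftIco_eq, fourierCoeffOn_eq_integral]
  simp only [fourier_coe_apply, smul_eq_mul, zero_add, sub_zero, div_one, one_smul]
  have hint : ∀ t : ℝ, cexp (2 * ↑π * Complex.I * ↑(-n) * ↑t / ↑(1:ℝ)) * ↑(Real.cosh (X * t - X / 2))
      = (cexp (-((X:ℂ)/2)) * cexp (((X:ℂ) - 2*π*Complex.I*n) * t)
        + cexp ((X:ℂ)/2) * cexp ((-(X:ℂ) - 2*π*Complex.I*n) * t)) / 2 := by
    intro t
    rw [Complex.ofReal_cosh, Complex.cosh, ← Complex.exp_add, ← Complex.exp_add,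
      mul_div_assoc', mul_add, ← Complex.exp_add, ← Complex.exp_add]
    push_cast
    ring_nf
  rw [intervalIntegral.integral_congr (fun t _ => hint t)]
  rw [intervalIntegral.integral_div, intervalIntegral.integral_add
      (Continuous.intervalIntegrable (by fun_prop) 0 1)
      (Continuous.intervalIntegrable (by fun_prop) 0 1),
    intervalIntegral.integral_const_mul, intervalIntegral.integral_const_mul,
    integral_exp_mul_complex (sub_ne' X hX n), integral_exp_mul_complex (neg_sub_ne' X hX n)]
  simp only [Complex.ofReal_one, Complex.ofReal_zero, mul_one, mul_zero, Complex.exp_zero,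
    exp_fac]
  have hAne : cexp ((X:ℂ)/2) ≠ 0 := Complex.exp_ne_zero _
  have hB' : cexp (-((X:ℂ)/2)) = (cexp ((X:ℂ)/2))⁻¹ := by
    rw [← Complex.exp_neg]
  have hEX : cexp (X:ℂ) = cexp ((X:ℂ)/2) * cexp ((X:ℂ)/2) := by
    rw [← Complex.exp_add]; ring_nf
  have hEmX : cexp (-(X:ℂ)) = (cexp ((X:ℂ)/2))⁻¹ * (cexp ((X:ℂ)/2))⁻¹ := by
    rw [show -(X:ℂ) = -((X:ℂ)/2) + -((X:ℂ)/2) by ring, Complex.exp_add, hB']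
  have hsinh : ((Real.sinh (X/2) : ℝ) : ℂ) = (cexp ((X:ℂ)/2) - (cexp ((X:ℂ)/2))⁻¹)/2 := by
    rw [Complex.ofReal_sinh, Complex.sinh, ← Complex.exp_neg]
    push_cast
    ring_nf
  have hden : ((X^2 + 4*π^2*(n:ℝ)^2 : ℝ) : ℂ)
      = ((X:ℂ) - 2*π*Complex.I*n) * ((X:ℂ) + 2*π*Complex.I*n) := by
    have h2 : (Complex.I)^2 = -1 := Complex.I_sq
    push_cast
    linear_combination (4*(π:ℂ)^2*(n:ℂ)^2) * h2
  have h1 := sub_ne' X hX n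
  have h2 := add_ne' X hX n
  have h3 := neg_sub_ne' X hX n
  rw [Complex.ofReal_div, Complex.ofReal_mul, hsinh, hden, hEX, hEmX, hB']
  set c : ℂ := 2*(π:ℂ)*Complex.I*(n:ℂ) with hc
  clear_value c
  set A : ℂ := cexp ((X:ℂ)/2) with hA
  clear_value A
  have h4 : (X:ℂ)^2 - c^2 ≠ 0 := by
    have := mul_ne_zero h1 h2
    intro h; apply this; linear_combination h
  have h5 : c^2 - (X:ℂ)^2 ≠ 0 := by
    intro h; apply h4; linear_combination -h
  have hD : -((X:ℂ) ^ 2 * A ^ 3 * 2) + A ^ 3 * c ^ 2 * 2 ≠ 0 := by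
    have he : -((X:ℂ) ^ 2 * A ^ 3 * 2) + A ^ 3 * c ^ 2 * 2
        = 2 * A ^ 3 * (c ^ 2 - (X:ℂ) ^ 2) := by ring
    rw [he]
    exact mul_ne_zero (mul_ne_zero two_ne_zero (pow_ne_zero _ hAne)) h5
  have hinv := inv_mul_cancel₀ hD
  field_simp [h4, h5]
  have hY : (((2*X:ℝ)):ℂ) = 2*(X:ℂ) := by push_cast; ring
  linear_combination ((A^2 - 1)*((X:ℂ) + c)) * hY

/-- Summability of the coefficient sequence over `ℤ`. -/
lemma summable_coeff (X : ℝ) (hX : X ≠ 0) :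
    Summable (fun n : ℤ => Real.sinh (X/2) * (2*X) / (X^2 + 4*π^2*(n:ℝ)^2)) := by
  have hbase : Summable (fun n : ℕ => (X^2 + 4*π^2*(n:ℝ)^2)⁻¹) := by
    rw [← summable_nat_add_iff 1]
    have h1 : Summable (fun n : ℕ => (((n:ℝ)+1)^2)⁻¹) := by
      have := (summable_nat_add_iff (f := fun n : ℕ => ((n:ℝ)^2)⁻¹) 1).mpr
        (by simpa [one_div] using Real.summable_one_div_nat_pow.mpr (by norm_num : 1 < 2))
      exact this.congr (fun n => by push_cast; ring_nf)
    refine h1.of_nonneg_of_le (fun n => by positivity) (fun n => ?_)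
    have hp : (1:ℝ) ≤ 4*π^2 := by nlinarith [Real.pi_gt_three]
    have hle : ((n:ℝ)+1)^2 ≤ X^2 + 4*π^2*((n+1 : ℕ):ℝ)^2 := by
      push_cast
      nlinarith [sq_nonneg X, sq_nonneg ((n:ℝ)+1)]
    exact inv_anti₀ (by positivity) hle
  have hZ : Summable (fun n : ℤ => (X^2 + 4*π^2*(n:ℝ)^2)⁻¹) := by
    refine Summable.of_nat_of_neg (hbase.congr fun n => by norm_num)
      (hbase.congr fun n => by push_cast; ring_nf)
  exact (hZ.mul_left (Real.sinh (X/2) * (2*X))).congr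
    (fun n => (div_eq_mul_inv _ _).symm)

/-- The Fourier expansion evaluated at `0`. -/
lemma hasSum_int (X : ℝ) (hX : X ≠ 0) :
    HasSum (fun n : ℤ => Real.sinh (X/2) * (2*X) / (X^2 + 4*π^2*(n:ℝ)^2))
      (Real.cosh (X/2)) := by
  haveI : Fact ((0:ℝ) < 1) := ⟨one_pos⟩
  set g : ℝ → ℂ := fun t => ((Real.cosh (X*t - X/2) : ℝ) : ℂ) with hg
  have hg0 : g 0 = g 1 := by
    simp only [hg]
    rw [show X*0 - X/2 = -(X/2) by ring, show X*1 - X/2 = X/2 by ring, Real.cosh_neg]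
  have hgc : Continuous (AddCircle.liftIco 1 0 g) := by
    apply AddCircle.liftIco_zero_continuous hg0
    fun_prop
  set F : C(AddCircle (1:ℝ), ℂ) := ⟨AddCircle.liftIco 1 0 g, hgc⟩ with hF
  have hcoeff : ∀ n : ℤ, fourierCoeff (⇑F) n
      = ((Real.sinh (X/2) * (2*X) / (X^2 + 4*π^2*(n:ℝ)^2) : ℝ) : ℂ) := fun n => coeff_eq X hX n
  have hsummable : Summable (fourierCoeff (⇑F)) := by
    rw [show fourierCoeff (⇑F) = fun n : ℤ =>
        ((Real.sinh (X/2) * (2*X) / (X^2 + 4*π^2*(n:ℝ)^2) : ℝ) : ℂ) from funext hcoeff]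
    exact Complex.summable_ofReal.mpr (summable_coeff X hX)
  have HS := has_pointwise_sum_fourier_series_of_summable hsummable (((0:ℝ) : AddCircle (1:ℝ)))
  simp only [QuotientAddGroup.mk_zero, fourier_eval_zero, smul_eq_mul, mul_one] at HS
  have hF0 : F (((0:ℝ)) : AddCircle (1:ℝ)) = ((Real.cosh (X/2) : ℝ) : ℂ) := by
    show AddCircle.liftIco 1 0 g (((0:ℝ)) : AddCircle (1:ℝ)) = _
    rw [AddCircle.liftIco_zero_coe_apply (by constructor <;> norm_num)]
    simp only [hg]
    rw [show X*0 - X/2 = -(X/2) by ring, Real.cosh_neg]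
  rw [QuotientAddGroup.mk_zero] at hF0
  rw [hF0, show (fun n : ℤ => fourierCoeff (⇑F) n) = fun n : ℤ =>
      ((Real.sinh (X/2) * (2*X) / (X^2 + 4*π^2*(n:ℝ)^2) : ℝ) : ℂ) from funext hcoeff] at HS
  exact Complex.hasSum_ofReal.mp HS

lemma hasSum_nat (x : ℝ) (hx : x ≠ 0) :
    HasSum (fun n : ℕ => x ^ 2 / (x ^ 2 + ((n + 1 : ℕ) : ℝ) ^ 2 * π ^ 2))
      ((x * Real.cosh x - Real.sinh x) / (2 * Real.sinh x)) := by
  have hs : Real.sinh x ≠ 0 := Real.sinh_ne_zero.mpr hx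
  have H := (hasSum_int (2*x) (by simpa using hx)).nat_add_neg
  rw [← hasSum_nat_add_iff' 1] at H
  have H2 := H.mul_left (x / (2 * Real.sinh x))
  rw [show 2*x/2 = x by ring] at H2
  convert H2 using 1
  · rfl
  · funext n
    push_cast
    have h1 : (0:ℝ) < x^2 + ((n:ℝ)+1)^2*π^2 := by positivity
    have h2 : (0:ℝ) < (2*x)^2 + 4*π^2*((n:ℝ)+1)^2 := by positivity
    field_simp
    ring
  · simp only [Finset.sum_range_one]
    push_cast
    field_simp [hx, hs]
    ring

end CothMittagLeffler

/-- Mittag-Leffler partial fraction expansion of the hyperbolic cotangent: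
for `x ≠ 0`, `x coth x = 1 + 2 Σ_{n≥1} x²/(x² + n²π²)`, the series converging
(absolutely, as a series of nonnegative terms). -/
theorem coth_mittag_leffler (x : ℝ) (hx : x ≠ 0) :
    Summable (fun n : ℕ => x ^ 2 / (x ^ 2 + ((n + 1 : ℕ) : ℝ) ^ 2 * π ^ 2)) ∧
    x * coth x
      = 1 + 2 * ∑' n : ℕ, x ^ 2 / (x ^ 2 + ((n + 1 : ℕ) : ℝ) ^ 2 * π ^ 2) := by
  have H := CothMittagLeffler.hasSum_nat x hx
  refine ⟨H.summable, ?_⟩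
  rw [H.tsum_eq, coth]
  have hs : Real.sinh x ≠ 0 := Real.sinh_ne_zero.mpr hx
  field_simp
  ring
end

section
/- For γ₀ > 0, ω₀ > 0, ω_c ∈ ℝ, the principal-value integral (ω₀²/π) ∫_{-∞}^{∞} (1/ω) Im[−(ω² − ω₀² − ωω_c + iγ₀ω)^{-1}] dω = 1; equivalently, (ω₀²/π) ∫_{-∞}^{∞} Φ(ω) dω = 1 where Φ(ω) = γ₀/[(ω² − ω₀² − ωω_c)² + (γ₀ω)²]. -/
open Real MeasureTheory

section aux

open Filter Set Topology

variable {γ₀ ω₀ : ℝ}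

private lemma denom_pos (hγ : 0 < γ₀) (hω₀ : 0 < ω₀) (c ω : ℝ) :
    0 < (ω ^ 2 - ω₀ ^ 2 - ω * c) ^ 2 + (γ₀ * ω) ^ 2 := by
  rcases eq_or_ne ω 0 with rfl | hω
  · have : (0:ℝ) < (ω₀ ^ 2) ^ 2 := by positivity
    simpa using this
  · have h1 : 0 < (γ₀ * ω) ^ 2 := by positivity
    nlinarith [sq_nonneg (ω ^ 2 - ω₀ ^ 2 - ω * c)]

private lemma key_halfline (hγ : 0 < γ₀) (hω₀ : 0 < ω₀) (c : ℝ) :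
    IntegrableOn (fun ω : ℝ => (ω ^ 2 + ω₀ ^ 2) *
        (γ₀ / ((ω ^ 2 - ω₀ ^ 2 - ω * c) ^ 2 + (γ₀ * ω) ^ 2))) (Ioi 0) ∧
    ∫ ω in Ioi (0:ℝ), (ω ^ 2 + ω₀ ^ 2) *
        (γ₀ / ((ω ^ 2 - ω₀ ^ 2 - ω * c) ^ 2 + (γ₀ * ω) ^ 2)) = π := by
  set g' : ℝ → ℝ := fun ω => (ω ^ 2 + ω₀ ^ 2) *
      (γ₀ / ((ω ^ 2 - ω₀ ^ 2 - ω * c) ^ 2 + (γ₀ * ω) ^ 2)) with hg'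
  set F : ℝ → ℝ := fun ω => if ω ≤ 0 then -(π/2) else arctan ((ω - c - ω₀ ^ 2 * ω⁻¹) / γ₀)
    with hF
  have hFpos : ∀ ω : ℝ, 0 < ω → F ω = arctan ((ω - c - ω₀ ^ 2 * ω⁻¹) / γ₀) := by
    intro ω hω; simp [hF, not_le.mpr hω]
  -- derivative
  have hderiv : ∀ x ∈ Ioi (0:ℝ), HasDerivAt F (g' x) x := by
    intro x hx
    have hx0 : (0:ℝ) < x := hx
    have hinner : HasDerivAt (fun ω : ℝ => (ω - c - ω₀ ^ 2 * ω⁻¹) / γ₀)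
        ((1 - ω₀ ^ 2 * (-(x ^ 2)⁻¹)) / γ₀) x :=
      (((hasDerivAt_id x).sub_const c).sub
        ((hasDerivAt_inv hx0.ne').const_mul (ω₀ ^ 2))).div_const γ₀
    have harctan := (Real.hasDerivAt_arctan ((x - c - ω₀ ^ 2 * x⁻¹) / γ₀)).comp x hinner
    have heq : (1 / (1 + ((x - c - ω₀ ^ 2 * x⁻¹) / γ₀) ^ 2)) *
        ((1 - ω₀ ^ 2 * (-(x ^ 2)⁻¹)) / γ₀) = g' x := by
      have hD := (denom_pos hγ hω₀ c x).ne'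
      rw [hg']
      have h1 : (1:ℝ) + ((x - c - ω₀ ^ 2 * x⁻¹) / γ₀) ^ 2 ≠ 0 := by positivity
      field_simp
      ring
    have hmain : HasDerivAt (fun ω : ℝ => arctan ((ω - c - ω₀ ^ 2 * ω⁻¹) / γ₀)) (g' x) x := by
      rw [← heq]; exact harctan
    apply hmain.congr_of_eventuallyEq
    filter_upwards [isOpen_Ioi.mem_nhds hx] with ω (hω : 0 < ω)
    exact hFpos ω hω
  -- nonnegativity
  have hpos : ∀ x ∈ Ioi (0:ℝ), 0 ≤ g' x := by
    intro x _
    have := denom_pos hγ hω₀ c x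
    rw [hg']; positivity
  -- continuity at 0 from the right
  have hF0 : F 0 = -(π/2) := by simp [hF]
  have hcont : ContinuousWithinAt F (Ici 0) 0 := by
    rw [← continuousWithinAt_Ioi_iff_Ici]
    rw [ContinuousWithinAt, hF0]
    have h1 : Tendsto (fun ω : ℝ => ω₀ ^ 2 * ω⁻¹) (𝓝[>] 0) atTop :=
      tendsto_inv_nhdsGT_zero.const_mul_atTop (by positivity)
    have h2 : Tendsto (fun ω : ℝ => ω - c - ω₀ ^ 2 * ω⁻¹) (𝓝[>] 0) atBot := by
      have hc : Tendsto (fun ω : ℝ => ω - c) (𝓝[>] 0) (𝓝 (0 - c)) :=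
        (continuous_id.sub continuous_const).continuousWithinAt
      simpa [sub_eq_add_neg] using hc.add_atBot (tendsto_neg_atTop_atBot.comp h1)
    have h3 : Tendsto (fun ω : ℝ => (ω - c - ω₀ ^ 2 * ω⁻¹) / γ₀) (𝓝[>] 0) atBot :=
      h2.atBot_div_const hγ
    have h4 : Tendsto (fun ω : ℝ => arctan ((ω - c - ω₀ ^ 2 * ω⁻¹) / γ₀)) (𝓝[>] 0)
        (𝓝 (-(π/2))) := (Real.tendsto_arctan_atBot.mono_right nhdsWithin_le_nhds).comp h3
    apply h4.congr'
    filter_upwards [self_mem_nhdsWithin] with ω (hω : 0 < ω)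
    exact (hFpos ω hω).symm
  -- limit at infinity
  have htop : Tendsto F atTop (𝓝 (π/2)) := by
    have h1 : Tendsto (fun ω : ℝ => -(ω₀ ^ 2 * ω⁻¹)) atTop (𝓝 (-(ω₀ ^ 2 * 0))) :=
      (tendsto_inv_atTop_zero.const_mul (ω₀ ^ 2)).neg
    have h2 : Tendsto (fun ω : ℝ => ω - c - ω₀ ^ 2 * ω⁻¹) atTop atTop := by
      have hb : Tendsto (fun ω : ℝ => ω - c) atTop atTop :=
        tendsto_atTop_add_const_right atTop (-c) tendsto_id
      simpa [sub_eq_add_neg] using hb.atTop_add h1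
    have h3 : Tendsto (fun ω : ℝ => (ω - c - ω₀ ^ 2 * ω⁻¹) / γ₀) atTop atTop :=
      h2.atTop_div_const hγ
    have h4 : Tendsto (fun ω : ℝ => arctan ((ω - c - ω₀ ^ 2 * ω⁻¹) / γ₀)) atTop
        (𝓝 (π/2)) := (Real.tendsto_arctan_atTop.mono_right nhdsWithin_le_nhds).comp h3
    apply h4.congr'
    filter_upwards [eventually_gt_atTop (0:ℝ)] with ω hω
    exact (hFpos ω hω).symm
  refine ⟨integrableOn_Ioi_deriv_of_nonneg hcont hderiv hpos htop, ?_⟩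
  have := integral_Ioi_of_hasDerivAt_of_nonneg hcont hderiv hpos htop
  rw [hF0] at this
  rw [this]; ring

/-- substitution `t ↦ -ω₀²/t` from `Iio 0` onto `Ioi 0`. -/
private lemma himg (hω₀ : 0 < ω₀) :
    (fun t : ℝ => -ω₀ ^ 2 / t) '' Iio 0 = Ioi 0 := by
  ext y
  constructor
  · rintro ⟨t, ht, rfl⟩
    exact div_pos_of_neg_of_neg (neg_lt_zero.mpr (by positivity)) (Set.mem_Iio.mp ht)
  · intro hy
    refine ⟨-ω₀ ^ 2 / y, Set.mem_Iio.mpr (div_neg_of_neg_of_pos (neg_lt_zero.mpr (by positivity)) hy), ?_⟩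
    field_simp

end aux

/-- The classical (`n = 0`) term of the potential-energy Matsubara expansion:
`(ω₀²/π) ∫ Φ(ω) dω = 1` with `Φ(ω) = γ₀/[(ω²−ω₀²−ωω_c)² + (γ₀ω)²]`; equivalently,
since `Im[−(ω²−ω₀²−ωω_c+iγ₀ω)⁻¹] = γ₀ω/[(ω²−ω₀²−ωω_c)² + (γ₀ω)²]`, the
principal-value integral `(ω₀²/π) ∫ (1/ω) Im[−(⋯)⁻¹] dω` equals `1`. -/
theorem classical_potential_term
    (γ₀ ω₀ ω_c : ℝ) (hγ : 0 < γ₀) (hω₀ : 0 < ω₀)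
    (Φ : ℝ → ℝ)
    (hΦ : ∀ ω : ℝ, Φ ω = γ₀ / ((ω ^ 2 - ω₀ ^ 2 - ω * ω_c) ^ 2 + (γ₀ * ω) ^ 2)) :
    (ω₀ ^ 2 / π) * ∫ ω : ℝ, Φ ω = 1 := by
  have hD : ∀ ω : ℝ, 0 < (ω ^ 2 - ω₀ ^ 2 - ω * ω_c) ^ 2 + (γ₀ * ω) ^ 2 :=
    denom_pos hγ hω₀ ω_c
  have hΦeq : Φ = fun ω => γ₀ / ((ω ^ 2 - ω₀ ^ 2 - ω * ω_c) ^ 2 + (γ₀ * ω) ^ 2) := funext hΦ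
  have hΦcont : Continuous Φ := by
    rw [hΦeq]
    exact continuous_const.div (by continuity) (fun ω => (hD ω).ne')
  have hΦnn : ∀ ω : ℝ, 0 ≤ Φ ω := by
    intro ω; rw [hΦ]; positivity
  obtain ⟨hint_sum, hval_sum⟩ := key_halfline hγ hω₀ ω_c
  -- integrability of `ω² Φ` and `Φ` on `Ioi 0`
  have hbound : ∀ (a b : ℝ), (0 ≤ a) → (a ≤ b) →
      ∀ ω : ℝ, a * Φ ω ≤ b * Φ ω := fun a b _ hab ω =>
    mul_le_mul_of_nonneg_right hab (hΦnn ω)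
  have hint1 : IntegrableOn (fun ω : ℝ => ω ^ 2 * Φ ω) (Set.Ioi 0) := by
    apply hint_sum.mono' ((continuous_pow 2).mul hΦcont).aestronglyMeasurable.restrict
    filter_upwards with ω
    rw [Real.norm_eq_abs, Pi.mul_apply, abs_of_nonneg (show 0 ≤ ω ^ 2 * Φ ω by have := hΦnn ω; positivity), hΦ]
    have h1 : ω ^ 2 ≤ ω ^ 2 + ω₀ ^ 2 := by nlinarith
    have h2 : 0 ≤ γ₀ / ((ω ^ 2 - ω₀ ^ 2 - ω * ω_c) ^ 2 + (γ₀ * ω) ^ 2) := by positivity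
    exact mul_le_mul_of_nonneg_right h1 h2
  have hint2 : IntegrableOn Φ (Set.Ioi 0) := by
    apply (hint_sum.const_mul ((ω₀ ^ 2)⁻¹)).mono' hΦcont.aestronglyMeasurable.restrict
    filter_upwards with ω
    rw [Real.norm_eq_abs, abs_of_nonneg (hΦnn ω), hΦ]
    have key : ∀ r : ℝ, 0 ≤ r → r ≤ (ω₀ ^ 2)⁻¹ * ((ω ^ 2 + ω₀ ^ 2) * r) := by
      intro r hr
      have h3 : (ω₀ ^ 2)⁻¹ * ((ω ^ 2 + ω₀ ^ 2) * r) = r + (ω₀ ^ 2)⁻¹ * ω ^ 2 * r := by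
        have hω2 : (ω₀ : ℝ) ^ 2 ≠ 0 := by positivity
        field_simp
        ring
      have h4 : 0 ≤ (ω₀ ^ 2)⁻¹ * ω ^ 2 * r :=
        mul_nonneg (mul_nonneg (by positivity) (sq_nonneg ω)) hr
      linarith
    exact key _ (by positivity)
  -- splitting the half-line integral
  have hsplit : (∫ ω in Set.Ioi (0:ℝ), ω ^ 2 * Φ ω) + ω₀ ^ 2 * ∫ ω in Set.Ioi (0:ℝ), Φ ω
      = π := by
    rw [← hval_sum, ← MeasureTheory.integral_const_mul,
      ← MeasureTheory.integral_add hint1 (hint2.const_mul _)]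
    apply MeasureTheory.integral_congr_ae
    filter_upwards with ω
    rw [hΦ]; ring
  -- change of variables t ↦ -ω₀²/t on Iio 0
  have hder : ∀ t ∈ Set.Iio (0:ℝ), HasDerivWithinAt (fun t : ℝ => -ω₀ ^ 2 / t)
      (ω₀ ^ 2 / t ^ 2) (Set.Iio 0) t := by
    intro t ht
    have ht0 : t ≠ 0 := ne_of_lt ht
    have h := (hasDerivAt_inv ht0).const_mul (-ω₀ ^ 2 : ℝ)
    have h2 : HasDerivAt (fun y : ℝ => -ω₀ ^ 2 / y) (ω₀ ^ 2 / t ^ 2) t := by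
      simp only [div_eq_mul_inv]
      exact h.congr_deriv (by ring)
    exact h2.hasDerivWithinAt
  have hinj : Set.InjOn (fun t : ℝ => -ω₀ ^ 2 / t) (Set.Iio 0) := by
    intro a ha b hb h
    have ha0 : a ≠ 0 := ne_of_lt ha
    have hb0 : b ≠ 0 := ne_of_lt hb
    have hω2 : (ω₀ : ℝ) ^ 2 ≠ 0 := by positivity
    dsimp at h
    field_simp at h
    exact neg_inj.mp h.symm
  have hcongr : ∀ t ∈ Set.Iio (0:ℝ),
      |ω₀ ^ 2 / t ^ 2| • ((-ω₀ ^ 2 / t) ^ 2 * Φ (-ω₀ ^ 2 / t)) = ω₀ ^ 2 * Φ t := by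
    intro t ht
    have ht0 : t ≠ 0 := ne_of_lt ht
    have hDt := (hD t).ne'
    have hDu := (hD (-ω₀ ^ 2 / t)).ne'
    rw [smul_eq_mul, abs_of_nonneg (by positivity), hΦ, hΦ]
    field_simp
    ring
  have hsub : (∫ ω in Set.Ioi (0:ℝ), ω ^ 2 * Φ ω) = ω₀ ^ 2 * ∫ t in Set.Iio (0:ℝ), Φ t := by
    have h := integral_image_eq_integral_abs_deriv_smul measurableSet_Iio hder hinj
      (fun ω : ℝ => ω ^ 2 * Φ ω)
    rw [himg hω₀] at h
    rw [h, ← MeasureTheory.integral_const_mul]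
    exact MeasureTheory.setIntegral_congr_fun measurableSet_Iio hcongr
  -- integrability of Φ on Iio 0
  have hint3 : IntegrableOn Φ (Set.Iio 0) := by
    have hiff := integrableOn_image_iff_integrableOn_abs_deriv_smul measurableSet_Iio hder hinj
      (fun ω : ℝ => ω ^ 2 * Φ ω)
    rw [himg hω₀] at hiff
    have h5 := hiff.mp hint1
    have h6 : IntegrableOn (fun t : ℝ => ω₀ ^ 2 * Φ t) (Set.Iio 0) :=
      (h5.congr_fun hcongr measurableSet_Iio)
    have h7 : IntegrableOn (fun t : ℝ => (ω₀ ^ 2)⁻¹ * (ω₀ ^ 2 * Φ t)) (Set.Iio 0) :=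
      h6.const_mul ((ω₀ ^ 2)⁻¹)
    refine MeasureTheory.IntegrableOn.congr_fun h7 (fun t _ => ?_) measurableSet_Iio
    field_simp
  -- assemble
  have hω2 : (ω₀ : ℝ) ^ 2 ≠ 0 := by positivity
  have htotal : ∫ ω : ℝ, Φ ω = (∫ ω in Set.Iio (0:ℝ), Φ ω) + ∫ ω in Set.Ioi (0:ℝ), Φ ω := by
    rw [← intervalIntegral.integral_Iio_add_Ici hint3 (Iff.mpr integrableOn_Ici_iff_integrableOn_Ioi hint2),
      integral_Ici_eq_integral_Ioi]
  have hπ : ω₀ ^ 2 * ∫ ω : ℝ, Φ ω = π := by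
    rw [htotal, mul_add, ← hsub, hsplit]
  rw [div_mul_eq_mul_div, hπ]
  exact div_self Real.pi_ne_zero
end
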